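/- Assume the function z ↦ g(2,z) is locally Lipschitz, g(2,−1) = 0, and g(2,z) > 0 for all z ∈ [−2,−1). If z : [0,∞) → ℝ satisfies z′(t) = g(2, z(t)) for all t ≥ 0 and z(0) = −2, then −2 ≤ z(t) < −1 for all t ≥ 0, and z(t) → −1 as t → ∞. Hence the forward orbit of every entry point (2,θ,−2) of the Wilson flow is trapped in 𝕎 and limits to the periodic orbit O₁ = {(2,θ,−1)}. (Proposition 2.1, item (4).) -/

import Mathlib

open Set Filter
open scoped Topology

/-- Proposition 2.1, item (4): if `z ↦ g(2,z)` is locally Lipschitz, `g(2,-1) = 0` and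
`g(2,z) > 0` for `z ∈ [-2,-1)`, then any solution of `z' = g(2,z)` on `[0,∞)` with
`z(0) = -2` satisfies `-2 ≤ z(t) < -1` for all `t ≥ 0` and `z(t) → -1` as `t → ∞`:
the forward orbit of every entry point `(2,θ,-2)` is trapped and limits to the periodic
orbit `O₁ = {(2,θ,-1)}`. -/
theorem wilson_entry_orbit_trapped
    (g : ℝ × ℝ → ℝ)
    (hLip : LocallyLipschitz (fun w : ℝ => g (2, w)))
    (hg0 : g (2, -1) = 0)
    (hgpos : ∀ w ∈ Ico (-2 : ℝ) (-1 : ℝ), 0 < g (2, w))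
    (z : ℝ → ℝ)
    (hode : ∀ t : ℝ, 0 ≤ t → HasDerivAt z (g (2, z t)) t)
    (hz0 : z 0 = -2) :
    (∀ t : ℝ, 0 ≤ t → z t ∈ Ico (-2 : ℝ) (-1 : ℝ)) ∧
    Tendsto z atTop (nhds (-1)) := by
  have hcont : Continuous (fun w : ℝ => g (2, w)) := hLip.continuous
  have hzc : ∀ t : ℝ, 0 ≤ t → ContinuousAt z t := fun t ht => (hode t ht).continuousAt
  -- Part A: lower bound
  have hlow : ∀ t : ℝ, 0 ≤ t → -2 ≤ z t := by
    by_contra hcon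
    push_neg at hcon
    obtain ⟨t₁, ht₁0, ht₁⟩ := hcon
    have ht₁pos : 0 < t₁ := by
      rcases eq_or_lt_of_le ht₁0 with rfl | hlt
      · rw [hz0] at ht₁; linarith
      · exact hlt
    set A : Set ℝ := Icc 0 t₁ ∩ z ⁻¹' Ici (-2) with hA
    have hAclosed : IsClosed A := by
      apply ContinuousOn.preimage_isClosed_of_isClosed _ isClosed_Icc isClosed_Ici
      exact fun t ht => (hzc t ht.1).continuousWithinAt
    have hAne : A.Nonempty := ⟨0, ⟨le_rfl, ht₁0⟩, by simp [hz0]⟩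
    have hAbdd : BddAbove A := (bddAbove_Icc).mono inter_subset_left
    set s := sSup A with hs
    have hsA : s ∈ A := hAclosed.csSup_mem hAne hAbdd
    have hs0 : 0 ≤ s := hsA.1.1
    have hst₁ : s ≤ t₁ := hsA.1.2
    have hzs_ge : -2 ≤ z s := hsA.2
    have hslt : s < t₁ :=
      lt_of_le_of_ne hst₁ (fun he => absurd hzs_ge (by rw [he]; exact not_le.mpr ht₁))
    have hbetween : ∀ t, t ∈ Ioc s t₁ → z t < -2 := by
      intro t ht
      by_contra hzt
      push_neg at hzt
      have : t ∈ A := ⟨⟨le_trans hs0 ht.1.le, ht.2⟩, hzt⟩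
      exact absurd (le_csSup hAbdd this) (not_le.mpr ht.1)
    have hzs_le : z s ≤ -2 := by
      have hcw : ContinuousWithinAt z (Ioi s) s := (hzc s hs0).continuousWithinAt
      refine le_of_tendsto hcw ?_
      filter_upwards [Ioc_mem_nhdsGT_of_mem ⟨le_rfl, hslt⟩] with t ht
      exact (hbetween t ht).le
    have hzs : z s = -2 := le_antisymm hzs_le hzs_ge
    have hdpos : 0 < g (2, z s) := by
      rw [hzs]; exact hgpos _ ⟨le_rfl, by norm_num⟩
    have hslope : Tendsto (slope z s) (𝓝[>] s) (𝓝 (g (2, z s))) :=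
      (hasDerivAt_iff_tendsto_slope.mp (hode s hs0)).mono_left
        (nhdsWithin_mono _ fun x hx => ne_of_gt hx)
    have hev : ∀ᶠ t in 𝓝[>] s, 0 < slope z s t :=
      hslope.eventually (eventually_gt_nhds hdpos)
    obtain ⟨t, htslope, htmem, htlt⟩ :=
      (hev.and (eventually_mem_nhdsWithin.and
        (eventually_nhdsWithin_of_eventually_nhds
          (eventually_lt_nhds hslt)))).exists
    have hts : s < t := htmem
    have h1 : z t - z s > 0 := by
      have h2 := mul_pos htslope (sub_pos.mpr hts)
      rwa [slope_def_field, div_mul_cancel₀] at h2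
      exact ne_of_gt (sub_pos.mpr hts)
    have h3 : z t < -2 := hbetween t ⟨hts, htlt.le⟩
    rw [hzs] at h1
    linarith
  -- Part B: upper bound
  have hupp : ∀ t : ℝ, 0 ≤ t → z t < -1 := by
    by_contra hcon
    push_neg at hcon
    obtain ⟨t₁, ht₁0, ht₁⟩ := hcon
    set T : Set ℝ := Ici 0 ∩ z ⁻¹' Ici (-1) with hT
    have hTclosed : IsClosed T := by
      apply ContinuousOn.preimage_isClosed_of_isClosed _ isClosed_Ici isClosed_Ici
      exact fun t ht => (hzc t ht).continuousWithinAt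
    have hTne : T.Nonempty := ⟨t₁, ht₁0, ht₁⟩
    have hTbdd : BddBelow T := ⟨0, fun t ht => ht.1⟩
    set s := sInf T with hs
    have hsT : s ∈ T := hTclosed.csInf_mem hTne hTbdd
    have hs0 : 0 ≤ s := hsT.1
    have hspos : 0 < s :=
      lt_of_le_of_ne hs0 (fun he => absurd hsT.2 (by rw [← he]; simp only [Set.mem_preimage, Set.mem_Ici, hz0]; norm_num))
    have hbefore : ∀ t, t ∈ Ico 0 s → z t < -1 := by
      intro t ht
      by_contra hzt
      push_neg at hzt
      exact absurd (csInf_le hTbdd ⟨ht.1, hzt⟩) (not_le.mpr ht.2)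
    have hzs_le : z s ≤ -1 := by
      have hcw : ContinuousWithinAt z (Iio s) s := (hzc s hs0).continuousWithinAt
      refine le_of_tendsto hcw ?_
      filter_upwards [Ioo_mem_nhdsLT_of_mem ⟨hspos, le_rfl⟩] with t ht
      exact (hbefore t ⟨ht.1.le, ht.2⟩).le
    have hzs : z s = -1 := le_antisymm hzs_le hsT.2
    -- uniqueness argument near the first hitting time
    obtain ⟨K, U, hU, hKU⟩ := hLip (-1)
    obtain ⟨ε, hεpos, hball⟩ := Metric.mem_nhds_iff.mp hU
    obtain ⟨δ, hδpos, hδ⟩ := Metric.continuousAt_iff.mp (hzc s hs0) ε hεpos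
    set a := max (s - δ / 2) (s / 2) with ha
    have has : a < s := max_lt (by linarith) (by linarith)
    have ha0 : 0 < a := lt_of_lt_of_le (by linarith) (le_max_right _ _)
    have hmemU : ∀ t ∈ Icc a s, z t ∈ U := by
      intro t ht
      apply hball
      have h1 : s - δ / 2 ≤ a := le_max_left _ _
      have : dist t s < δ := by
        rw [Real.dist_eq, abs_lt]
        constructor <;> linarith [ht.1, ht.2, hδpos]
      have := hδ this
      rw [hzs] at this
      exact Metric.mem_ball.mpr this
    have huniq : EqOn z (fun _ => (-1 : ℝ)) (Icc a s) := by
      apply ODE_solution_unique_of_mem_Icc_left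
        (v := fun _ w => g (2, w)) (s := fun _ => U) (K := K) (fun _ _ => hKU)
      · exact fun t ht => (hzc t (le_trans ha0.le ht.1)).continuousWithinAt
      · exact fun t ht => (hode t (le_trans ha0.le ht.1.le)).hasDerivWithinAt
      · exact fun t ht => hmemU t ⟨ht.1.le, ht.2⟩
      · exact continuousOn_const
      · intro t ht
        simpa [hg0] using (hasDerivWithinAt_const t (Iic t) (-1 : ℝ))
      · exact fun t _ => hball (Metric.mem_ball_self hεpos)
      · simpa using hzs
    have hza1 : z a = -1 := huniq ⟨le_rfl, has.le⟩
    have hza2 : z a < -1 := hbefore a ⟨ha0.le, has⟩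
    linarith
  have hmem : ∀ t : ℝ, 0 ≤ t → z t ∈ Ico (-2 : ℝ) (-1 : ℝ) :=
    fun t ht => ⟨hlow t ht, hupp t ht⟩
  refine ⟨hmem, ?_⟩
  -- Part C: convergence to -1
  have hmono : StrictMonoOn z (Ici 0) := by
    apply strictMonoOn_of_deriv_pos (convex_Ici 0)
    · exact fun t ht => (hzc t ht).continuousWithinAt
    · intro t ht
      rw [interior_Ici] at ht
      rw [(hode t ht.le).deriv]
      exact hgpos _ (hmem t ht.le)
  set w : ℝ → ℝ := fun t => z (max t 0) with hw
  have hwmono : Monotone w := by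
    intro x y hxy
    exact hmono.monotoneOn (le_max_right x 0) (le_max_right y 0)
      (max_le_max hxy le_rfl)
  have hwbdd : BddAbove (range w) := by
    refine ⟨-1, ?_⟩
    rintro _ ⟨t, rfl⟩
    exact (hupp _ (le_max_right t 0)).le
  have hwL : Tendsto w atTop (𝓝 (⨆ t, w t)) := tendsto_atTop_ciSup hwmono hwbdd
  set L := ⨆ t, w t with hL
  have hzw : ∀ᶠ t in atTop, z t = w t := by
    filter_upwards [eventually_ge_atTop (0 : ℝ)] with t ht
    simp [hw, max_eq_left ht]
  have hzL : Tendsto z atTop (𝓝 L) := hwL.congr' (by filter_upwards [hzw] with t ht; exact ht.symm)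
  have hLle : L ≤ -1 := ciSup_le fun t => (hupp _ (le_max_right t 0)).le
  have hLge : -2 ≤ L := by
    have : w 0 ≤ L := le_ciSup hwbdd 0
    simpa [hw, hz0] using this
  have hLeq : L = -1 := by
    by_contra hne
    have hLlt : L < -1 := lt_of_le_of_ne hLle hne
    have hcpos : 0 < g (2, L) := hgpos _ ⟨hLge, hLlt⟩
    set c := g (2, L) with hc
    obtain ⟨δ, hδpos, hδ⟩ := Metric.continuousAt_iff.mp hcont.continuousAt (c / 2) (by linarith)
    obtain ⟨T₀, hT₀⟩ := (Metric.tendsto_atTop.mp hwL) δ hδpos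
    set T := max T₀ 0 with hT
    have hder : ∀ t, T ≤ t → c / 2 ≤ g (2, z t) := by
      intro t ht
      have ht0 : (0 : ℝ) ≤ t := le_trans (le_max_right _ _) ht
      have := hδ (x := z t) (by
        have := hT₀ t (le_trans (le_max_left _ _) ht)
        rwa [show w t = z t by simp [hw, max_eq_left ht0]] at this)
      rw [Real.dist_eq, abs_lt] at this
      linarith [this.1]
    have hmvt := Convex.mul_sub_le_image_sub_of_le_deriv (convex_Ici T) (f := z) (C := c / 2)
      (fun t ht => (hzc t (le_trans (le_max_right _ _) ht)).continuousWithinAt)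
      (fun t ht => by
        rw [interior_Ici] at ht
        exact ((hode t (le_trans (le_max_right _ _) ht.le)).differentiableAt).differentiableWithinAt)
      (fun t ht => by
        rw [interior_Ici] at ht
        rw [(hode t (le_trans (le_max_right _ _) ht.le)).deriv]
        exact hder t ht.le)
    have hkey := hmvt T (self_mem_Ici) (T + 4 / c)
      (by simp only [mem_Ici]; exact le_add_of_nonneg_right (by positivity))
      (le_add_of_nonneg_right (by positivity))
    have h2 : c / 2 * (T + 4 / c - T) = 2 := by
      field_simp
      ring
    rw [h2] at hkey
    have hzT : -2 ≤ z T := hlow T (le_max_right _ _)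
    have : z (T + 4 / c) < -1 :=
      hupp _ (add_nonneg (le_max_right _ _) (by positivity))
    linarith
  rw [← hLeq]
  exact hzL
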